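/- arXiv:2401.00626 — 4 statements merged into one kernel-verified Lean document; each statement's English description precedes it below -/
import Mathlib

section
/- For d ∈ {1,2}, the set K_d = {z ∈ ℂ : |z| < |z−λ| for all λ ∈ 𝔬_d with λ ≠ 0} is equal to the open rectangle {x + iy : x, y ∈ ℝ, |x| < 1/2, |y| < √d/2}. -/
open MeasureTheory Filter Topology

noncomputable section

/-- `ω` for the ring of integers of `ℚ(√-d)`. -/
def om (d : ℕ) : ℂ :=
  if d % 4 = 3 then (-1 + Complex.I * Real.sqrt d) / 2 else Complex.I * Real.sqrt d

/-- The ring of integers `𝔬_d = ℤ[ω]` as a subset of `ℂ`. -/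
def Od (d : ℕ) : Set ℂ := {z | ∃ n m : ℤ, z = (n : ℂ) + (m : ℂ) * om d}

/-- The field `ℚ(√-d)` as a subset of `ℂ`. -/
def Qd (d : ℕ) : Set ℂ := {z | ∃ a b : ℚ, z = (a : ℂ) + (b : ℂ) * om d}

/-- The open Dirichlet fundamental domain `K_d` centred at the origin. -/
def Kd (d : ℕ) : Set ℂ :=
  {z | ∀ lam ∈ Od d, lam ≠ 0 → ‖z‖ < ‖z - lam‖}

/-- The complex Gauss map associated with a nearest-integer map `fl`. -/
def gauss (fl : ℂ → ℂ) (z : ℂ) : ℂ := if z = 0 then 0 else 1 / z - fl (1 / z)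

/-- The `n`-th digit `a_n(z)` (for `n ≥ 1`) of the nearest-integer continued fraction. -/
def digit (fl : ℂ → ℂ) (n : ℕ) (z : ℂ) : ℂ := fl (1 / (gauss fl)^[n - 1] z)

/-- Auxiliary recursion producing `((p_{n-2}, q_{n-2}), (p_{n-1}, q_{n-1}))` at index `n`. -/
def convAux (a : ℕ → ℂ) : ℕ → (ℂ × ℂ) × (ℂ × ℂ)
  | 0 => ((0, 1), (1, 0))
  | n + 1 => ((convAux a n).2,
      (a n * (convAux a n).2.1 + (convAux a n).1.1,
       a n * (convAux a n).2.2 + (convAux a n).1.2))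

/-- The digit sequence of `z`, with `a_0 = 0`. -/
def aseq (fl : ℂ → ℂ) (z : ℂ) : ℕ → ℂ := fun k => if k = 0 then 0 else digit fl k z

/-- Numerator `p_n` of the `n`-th convergent of `z`. -/
def pconv (fl : ℂ → ℂ) (z : ℂ) (n : ℕ) : ℂ := (convAux (aseq fl z) (n + 1)).2.1

/-- Denominator `q_n` of the `n`-th convergent of `z`. -/
def qconv (fl : ℂ → ℂ) (z : ℂ) (n : ℕ) : ℂ := (convAux (aseq fl z) (n + 1)).2.2

/-- `p_{n-1}` (so `pprev fl z 0 = p_{-1} = 1`). -/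
def pprev (fl : ℂ → ℂ) (z : ℂ) (n : ℕ) : ℂ := (convAux (aseq fl z) (n + 1)).1.1

/-- `q_{n-1}` (so `qprev fl z 0 = q_{-1} = 0`). -/
def qprev (fl : ℂ → ℂ) (z : ℂ) (n : ℕ) : ℂ := (convAux (aseq fl z) (n + 1)).1.2


lemma abs_lt_sub_iff' (z lam : ℂ) :
    ‖z‖ < ‖z - lam‖ ↔
      2 * z.re * lam.re + 2 * z.im * lam.im < lam.re^2 + lam.im^2 := by
  rw [Complex.norm_def, Complex.norm_def,
    Real.sqrt_lt_sqrt_iff (Complex.normSq_nonneg z)]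
  simp only [Complex.normSq_apply, Complex.sub_re, Complex.sub_im]
  constructor <;> intro h <;> nlinarith

lemma term_bound (t c : ℝ) (hc : 0 < c) (ht : |t| < c / 2) (k : ℤ) :
    2 * t * (k : ℝ) * c ≤ (k : ℝ)^2 * c^2 ∧
      (k ≠ 0 → 2 * t * (k : ℝ) * c < (k : ℝ)^2 * c^2) := by
  rcases eq_or_ne k 0 with rfl | hk
  · simp
  · have h1 : (1 : ℝ) ≤ |(k : ℝ)| := by
      rw [← Int.cast_abs]; exact_mod_cast Int.one_le_abs hk
    have hkpos : (0:ℝ) < |(k : ℝ)| := lt_of_lt_of_le one_pos h1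
    have h2 : 2 * t * (k : ℝ) ≤ 2 * |t| * |(k : ℝ)| := by
      calc 2 * t * (k : ℝ) ≤ |2 * t * (k : ℝ)| := le_abs_self _
      _ = 2 * |t| * |(k : ℝ)| := by
          rw [abs_mul, abs_mul, abs_of_nonneg (by norm_num : (0:ℝ) ≤ 2)]
    have h3 : |(k : ℝ)| * |(k : ℝ)| = (k : ℝ)^2 := by
      rw [← abs_mul, ← sq, abs_sq]
    have h4' : 2 * |t| * |(k : ℝ)| < c * |(k : ℝ)| := by nlinarith
    have h4 : 2 * t * (k : ℝ) * c < c * |(k : ℝ)| * c := by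
      nlinarith [lt_of_le_of_lt h2 h4']
    have h5 : c * |(k : ℝ)| * c ≤ (k : ℝ)^2 * c^2 := by
      nlinarith [mul_nonneg (by nlinarith : (0:ℝ) ≤ |(k : ℝ)| * |(k : ℝ)| - |(k : ℝ)|)
        (mul_nonneg hc.le hc.le)]
    exact ⟨by linarith, fun _ => by linarith⟩
/-- for `d = 1, 2`, the Dirichlet fundamental domain `K_d` is the
open rectangle `{x + iy : |x| < 1/2, |y| < √d/2}`. -/
theorem Kd_eq_rectangle (d : ℕ) (hd : d = 1 ∨ d = 2) :
    Kd d = {z : ℂ | |z.re| < 1 / 2 ∧ |z.im| < Real.sqrt d / 2} := by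

  have hmod : d % 4 ≠ 3 := by rcases hd with h | h <;> simp [h]
  have hd0 : (0:ℝ) < d := by rcases hd with h | h <;> simp [h]
  have hs0 : 0 < Real.sqrt d := Real.sqrt_pos.mpr hd0
  have hs2 : Real.sqrt d * Real.sqrt d = d := Real.mul_self_sqrt hd0.le
  have hom : om d = Complex.I * Real.sqrt d := by simp [om, hmod]
  have hre : ∀ n m : ℤ, ((n : ℂ) + (m : ℂ) * om d).re = n := by
    intro n m; simp [hom]
  have him : ∀ n m : ℤ, ((n : ℂ) + (m : ℂ) * om d).im = m * Real.sqrt d := by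
    intro n m; simp [hom]
  ext z
  simp only [Kd, Set.mem_setOf_eq]
  constructor
  · intro h
    have g1 : ∀ n m : ℤ, ((n:ℤ),(m:ℤ)) ≠ (0,0) →
        2 * z.re * n + 2 * z.im * (m * Real.sqrt d) < n^2 + (m * Real.sqrt d)^2 := by
      intro n m hnm
      have hmem : ((n : ℂ) + (m : ℂ) * om d) ∈ Od d := ⟨n, m, rfl⟩
      have hne : ((n : ℂ) + (m : ℂ) * om d) ≠ 0 := by
        intro hzero
        apply hnm
        have hre0 : ((n : ℂ) + (m : ℂ) * om d).re = 0 := by rw [hzero]; simp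
        have him0 : ((n : ℂ) + (m : ℂ) * om d).im = 0 := by rw [hzero]; simp
        rw [hre n m] at hre0
        rw [him n m] at him0
        have hn : n = 0 := by exact_mod_cast hre0
        have hm : m = 0 := by
          have := mul_eq_zero.mp him0
          rcases this with h' | h'
          · exact_mod_cast h'
          · exact absurd h' hs0.ne'
        simp [hn, hm]
      have := (abs_lt_sub_iff' z _).mp (h _ hmem hne)
      rwa [hre n m, him n m] at this
    constructor
    · have p1 := g1 1 0 (by simp)
      have p2 := g1 (-1) 0 (by simp)
      rw [abs_lt]; push_cast at p1 p2; constructor <;> nlinarith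
    · have p1 := g1 0 1 (by simp)
      have p2 := g1 0 (-1) (by simp)
      rw [abs_lt]
      push_cast at p1 p2
      constructor <;> nlinarith
  · rintro ⟨hx, hy⟩ lam ⟨n, m, rfl⟩ hne
    rw [abs_lt_sub_iff', hre n m, him n m]
    have hnm : n ≠ 0 ∨ m ≠ 0 := by
      by_contra hc
      push_neg at hc
      exact hne (by simp [hc.1, hc.2])
    have Hx := term_bound z.re 1 one_pos (by simpa using hx) n
    have Hy := term_bound z.im (Real.sqrt d) hs0 hy m
    have hrw : (↑m * Real.sqrt d)^2 = (m:ℝ)^2 * Real.sqrt d ^ 2 := by ring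
    rw [hrw]
    rcases hnm with hn | hm
    · have := Hx.2 hn
      have := Hy.1
      nlinarith
    · have := Hy.2 hm
      have := Hx.1
      nlinarith


end
end

section
/- For d ∈ {3,7,11}, the set K_d = {z ∈ ℂ : |z| < |z−λ| for all λ ∈ 𝔬_d with λ ≠ 0} is equal to the open hexagon {x + iy : x, y ∈ ℝ, |x| < 1/2, |x − √d·y| < (d+1)/4, |x + √d·y| < (d+1)/4}. -/
open MeasureTheory Filter Topology

noncomputable section

set_option linter.unusedVariables false in
private lemma consecR (t : ℤ) : (0:ℝ) ≤ (t:ℝ) * ((t:ℝ) - 1) := by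
  have h : (0:ℤ) ≤ t * (t - 1) := by rcases le_or_gt t 0 with h | h <;> nlinarith
  exact_mod_cast h

private lemma consecR' (t : ℤ) : (0:ℝ) ≤ (t:ℝ) * ((t:ℝ) + 1) := by
  have h : (0:ℤ) ≤ t * (t + 1) := by
    rcases lt_or_ge t 0 with h | h
    · have h1 : t ≤ -1 := by omega
      nlinarith
    · nlinarith
  exact_mod_cast h

private lemma key' (a c e : ℝ) (n m : ℤ) (he : 1 ≤ e)
    (ha1 : -1 < a) (ha2 : a < 1) (hb1 : -e < a + c) (hb2 : a + c < e)
    (hc1 : -e < c) (hc2 : c < e) (hm : 0 ≤ m) (h : ¬(n = 0 ∧ m = 0)) :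
    a*n + c*m < (n:ℝ)^2 - (n:ℝ)*(m:ℝ) + (m:ℝ)^2*e := by
  have he' : (0:ℝ) ≤ e := by linarith
  rcases hm.lt_or_eq with hm | hm
  · -- m ≥ 1
    have hm1 : (1:ℝ) ≤ (m:ℝ) := by exact_mod_cast (by omega : 1 ≤ m)
    rcases lt_trichotomy n 0 with hn | hn | hn
    · -- n ≤ -1, m ≥ 1 : opposite signs
      have hn1 : (n:ℝ) ≤ -1 := by exact_mod_cast (by omega : n ≤ -1)
      have h1 : a*n < -(n:ℝ) := by nlinarith
      have h2 : c*m < e*m := by nlinarith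
      have h3 : -(n:ℝ) + e*m ≤ (n:ℝ)^2 - n*m + m^2*e := by
        nlinarith [consecR' n, mul_nonneg (consecR m) he',
          mul_nonneg (by linarith : (0:ℝ) ≤ -(n:ℝ)) (by linarith : (0:ℝ) ≤ (m:ℝ))]
      linarith
    · -- n = 0, m ≥ 1
      subst hn
      have h2 : c*m < e*m := by nlinarith
      have h3 : e*(m:ℝ) ≤ (m:ℝ)^2*e := by nlinarith [mul_nonneg (consecR m) he']
      push_cast; nlinarith
    · -- n ≥ 1, m ≥ 1
      have hn1 : (1:ℝ) ≤ (n:ℝ) := by exact_mod_cast (by omega : 1 ≤ n)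
      rcases le_or_gt m n with hnm | hnm
      · -- 1 ≤ m ≤ n
        have hnm' : (m:ℝ) ≤ (n:ℝ) := by exact_mod_cast hnm
        have h1 : a*((n:ℝ)-m) ≤ (n:ℝ)-m := by nlinarith
        have h2 : (a+c)*m < e*m := by nlinarith
        have h3 : ((n:ℝ)-m) + e*m ≤ (n:ℝ)^2 - n*m + m^2*e := by
          have hk := consecR (n - m)
          push_cast at hk
          nlinarith [mul_nonneg (consecR m) he',
            mul_nonneg (by linarith : (0:ℝ) ≤ (n:ℝ)-m) (by linarith : (0:ℝ) ≤ (m:ℝ))]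
        nlinarith
      · -- 1 ≤ n < m
        have hnm' : (n:ℝ) + 1 ≤ (m:ℝ) := by exact_mod_cast (by omega : n + 1 ≤ m)
        have h1 : (a+c)*n < e*n := by nlinarith
        have h2 : c*((m:ℝ)-n) < e*((m:ℝ)-n) := by nlinarith
        have h3 : e*(m:ℝ) ≤ (n:ℝ)^2 - n*m + m^2*e := by
          nlinarith [mul_nonneg (consecR m) (by linarith : (0:ℝ) ≤ e - 1), consecR m,
            mul_nonneg (by linarith : (0:ℝ) ≤ (m:ℝ)) (by linarith : (0:ℝ) ≤ (m:ℝ)-n-1),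
            sq_nonneg (n:ℝ)]
        nlinarith
  · -- m = 0, n ≠ 0
    have hm0 : m = 0 := hm.symm
    subst hm0
    have hn : n ≠ 0 := by tauto
    push_cast
    rcases lt_or_ge n 0 with hn' | hn'
    · have hn1 : (n:ℝ) ≤ -1 := by exact_mod_cast (by omega : n ≤ -1)
      nlinarith [consecR' n]
    · have hn1 : (1:ℝ) ≤ (n:ℝ) := by exact_mod_cast (by omega : 1 ≤ n)
      nlinarith [consecR n]

private lemma abs_lt_iff' (z l : ℂ) : ‖z‖ < ‖z - l‖ ↔
    2*(z.re*l.re + z.im*l.im) < l.re^2 + l.im^2 := by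
  rw [Complex.norm_def, Complex.norm_def,
    Real.sqrt_lt_sqrt_iff (Complex.normSq_nonneg _), Complex.normSq_apply,
    Complex.normSq_apply, Complex.sub_re, Complex.sub_im]
  constructor <;> intro h <;> nlinarith [h]

private lemma key (a c e : ℝ) (n m : ℤ) (he : 1 ≤ e)
    (ha : |a| < 1) (hb : |a + c| < e) (hc : |c| < e) (h : ¬(n = 0 ∧ m = 0)) :
    a*n + c*m < (n:ℝ)^2 - (n:ℝ)*(m:ℝ) + (m:ℝ)^2*e := by
  rw [abs_lt] at ha hb hc
  rcases le_or_gt 0 m with hm | hm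
  · exact key' a c e n m he ha.1 ha.2 hb.1 hb.2 hc.1 hc.2 hm h
  · have := key' (-a) (-c) e (-n) (-m) he (by linarith) (by linarith)
      (by linarith [hb.1, hb.2]) (by linarith [hb.1, hb.2])
      (by linarith) (by linarith) (by omega) (by omega)
    push_cast at this
    nlinarith [this]


/-- for `d = 3, 7, 11`, the Dirichlet fundamental domain `K_d` is
the open hexagon `{x + iy : |x| < 1/2, |x − √d·y| < (d+1)/4, |x + √d·y| < (d+1)/4}`. -/
theorem Kd_eq_hexagon (d : ℕ) (hd : d = 3 ∨ d = 7 ∨ d = 11) :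
    Kd d = {z : ℂ | |z.re| < 1 / 2 ∧
      |z.re - Real.sqrt d * z.im| < (d + 1) / 4 ∧
      |z.re + Real.sqrt d * z.im| < (d + 1) / 4} := by

  have hd4 : d % 4 = 3 := by rcases hd with rfl | rfl | rfl <;> decide
  have hd3 : (3:ℝ) ≤ (d:ℕ) := by rcases hd with rfl | rfl | rfl <;> norm_num
  set s : ℝ := Real.sqrt d with hs_def
  have hs2 : s^2 = d := Real.sq_sqrt (by positivity)
  have hom_re : (om d).re = -1/2 := by
    simp [om, hd4, Complex.div_re, Complex.add_re, Complex.mul_re]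
  have hom_im : (om d).im = s / 2 := by
    simp [om, hd4, Complex.div_im, Complex.add_im, Complex.mul_im, hs_def]
  have hlre : ∀ n m : ℤ, ((n:ℂ) + (m:ℂ) * om d).re = (n:ℝ) - m/2 := by
    intro n m
    simp [Complex.add_re, Complex.mul_re, hom_re, hom_im]
    ring
  have hlim : ∀ n m : ℤ, ((n:ℂ) + (m:ℂ) * om d).im = m * s / 2 := by
    intro n m
    simp [Complex.add_im, Complex.mul_im, hom_re, hom_im]
    ring
  ext z
  obtain ⟨x, y⟩ := z
  simp only [Kd, Od, Set.mem_setOf_eq]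
  constructor
  · intro h
    have key6 : ∀ n m : ℤ, ¬(n = 0 ∧ m = 0) →
        2*(x*((n:ℝ) - m/2) + y*(m*s/2)) < ((n:ℝ) - m/2)^2 + (m*s/2)^2 := by
      intro n m hnm
      have hne : ((n:ℂ) + (m:ℂ) * om d) ≠ 0 := by
        intro h0
        have him := congrArg Complex.im h0
        rw [hlim] at him
        simp at him
        have hsne : s ≠ 0 := by nlinarith
        have hm0' : m = 0 := by
          rcases him with h' | h'
          · exact h'
          · exact absurd h' hsne
        subst hm0'
        have hre := congrArg Complex.re h0
        rw [hlre] at hre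
        simp at hre
        exact hnm ⟨by exact_mod_cast hre, rfl⟩
      have := (abs_lt_iff' ⟨x, y⟩ _).1 (h _ ⟨n, m, rfl⟩ hne)
      rw [hlre, hlim] at this
      simpa using this
    have h10 := key6 1 0 (by simp)
    have h10' := key6 (-1) 0 (by simp)
    have h01 := key6 0 1 (by simp)
    have h01' := key6 0 (-1) (by simp)
    have h11 := key6 1 1 (by simp)
    have h11' := key6 (-1) (-1) (by simp)
    push_cast at h10 h10' h01 h01' h11 h11'
    simp only [Complex.add_re] at *
    refine ⟨abs_lt.2 ⟨by nlinarith, by nlinarith⟩,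
      abs_lt.2 ⟨by nlinarith, by nlinarith⟩,
      abs_lt.2 ⟨by nlinarith, by nlinarith⟩⟩
  · rintro ⟨h1, h2, h3⟩ lam ⟨n, m, rfl⟩ hne
    rw [abs_lt_iff', hlre, hlim]
    have hnm : ¬(n = 0 ∧ m = 0) := by
      rintro ⟨rfl, rfl⟩
      exact hne (by push_cast; ring)
    rw [abs_lt] at h1 h2 h3
    have hk := key (2*x) (s*y - x) ((d+1)/4) n m (by nlinarith)
      (abs_lt.2 ⟨by linarith [h1.1], by linarith [h1.2]⟩)
      (abs_lt.2 ⟨by linarith [h3.1], by linarith [h3.2]⟩)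
      (abs_lt.2 ⟨by linarith [h2.2], by linarith [h2.1]⟩) hnm
    have heq : ((n:ℝ) - (m:ℝ)/2)^2 + ((m:ℝ)*s/2)^2
        = (n:ℝ)^2 - (n:ℝ)*(m:ℝ) + (m:ℝ)^2*(((d:ℝ)+1)/4) := by
      linear_combination ((m:ℝ)^2/4) * hs2
    rw [heq]
    linarith [hk]

end
end

section
/- Let d ∈ {1,2,3,7,11}. (i) For every z ∈ K_d with z ∉ ℚ(√−d), the convergents of the nearest-integer 𝔬_d-continued fraction expansion of z satisfy p_n/q_n → z as n → ∞. (ii) For every z ∈ K_d with z ∈ ℚ(√−d), the algorithm stops in a finite number of steps, i.e. there exists n ≥ 0 with G^n(z) = 0. -/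
open MeasureTheory Filter Topology

noncomputable section

open MeasureTheory Filter Topology Complex

lemma sqc (d : ℕ) : ((Real.sqrt d : ℝ) : ℂ) ^ 2 = (d : ℂ) := by
  rw [← Complex.ofReal_pow, Real.sq_sqrt (by positivity)]
  push_cast; ring

lemma om_sq (d : ℕ) (hd : d = 1 ∨ d = 2 ∨ d = 3 ∨ d = 7 ∨ d = 11) :
    ∃ k l : ℤ, om d ^ 2 = (k : ℂ) + (l : ℂ) * om d := by
  have hs := sqc d
  have hI := Complex.I_sq
  rcases hd with rfl | rfl | rfl | rfl | rfl
  · exact ⟨-1, 0, by rw [om]; norm_num [Real.sqrt_one, Complex.I_sq]⟩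
  · exact ⟨-2, 0, by rw [om]; norm_num; linear_combination -hs + (Real.sqrt 2 : ℂ)^2 * hI⟩
  · exact ⟨-1, -1, by rw [om]; norm_num; linear_combination (-1/4 : ℂ) * hs + (1/4) * (Real.sqrt 3 : ℂ)^2 * hI⟩
  · exact ⟨-2, -1, by rw [om]; norm_num; linear_combination (-1/4 : ℂ) * hs + (1/4) * (Real.sqrt 7 : ℂ)^2 * hI⟩
  · exact ⟨-3, -1, by rw [om]; norm_num; linear_combination (-1/4 : ℂ) * hs + (1/4) * (Real.sqrt 11 : ℂ)^2 * hI⟩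
section helpers
variable {d : ℕ}

lemma Od_zero : (0:ℂ) ∈ Od d := ⟨0, 0, by push_cast; ring⟩
lemma Od_one : (1:ℂ) ∈ Od d := ⟨1, 0, by push_cast; ring⟩

lemma Od_add {a b : ℂ} (ha : a ∈ Od d) (hb : b ∈ Od d) : a + b ∈ Od d := by
  obtain ⟨n, m, rfl⟩ := ha; obtain ⟨n', m', rfl⟩ := hb
  exact ⟨n + n', m + m', by push_cast; ring⟩

lemma Od_neg {a : ℂ} (ha : a ∈ Od d) : -a ∈ Od d := by
  obtain ⟨n, m, rfl⟩ := ha; exact ⟨-n, -m, by push_cast; ring⟩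

lemma Od_mul (hd : d = 1 ∨ d = 2 ∨ d = 3 ∨ d = 7 ∨ d = 11)
    {a b : ℂ} (ha : a ∈ Od d) (hb : b ∈ Od d) : a * b ∈ Od d := by
  obtain ⟨k, l, hom⟩ := om_sq d hd
  obtain ⟨n, m, rfl⟩ := ha; obtain ⟨n', m', rfl⟩ := hb
  exact ⟨n * n' + m * m' * k, n * m' + m * n' + m * m' * l, by
    push_cast; linear_combination ((m : ℂ) * (m' : ℂ)) * hom⟩

lemma Od_sub (hd : d = 1 ∨ d = 2 ∨ d = 3 ∨ d = 7 ∨ d = 11)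
    {a b : ℂ} (ha : a ∈ Od d) (hb : b ∈ Od d) : a - b ∈ Od d := by
  rw [sub_eq_add_neg]; exact Od_add ha (Od_neg hb)

lemma Qd_zero : (0:ℂ) ∈ Qd d := ⟨0, 0, by push_cast; ring⟩

lemma Qd_add {a b : ℂ} (ha : a ∈ Qd d) (hb : b ∈ Qd d) : a + b ∈ Qd d := by
  obtain ⟨n, m, rfl⟩ := ha; obtain ⟨n', m', rfl⟩ := hb
  exact ⟨n + n', m + m', by push_cast; ring⟩

lemma Od_subset_Qd {a : ℂ} (ha : a ∈ Od d) : a ∈ Qd d := by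
  obtain ⟨n, m, rfl⟩ := ha; exact ⟨n, m, by push_cast; ring⟩

lemma om_re_im (hd : d = 1 ∨ d = 2 ∨ d = 3 ∨ d = 7 ∨ d = 11) :
    (d % 4 = 3 ∧ (om d).re = -(1/2) ∧ (om d).im = Real.sqrt d / 2) ∨
    (d % 4 ≠ 3 ∧ (om d).re = 0 ∧ (om d).im = Real.sqrt d) := by
  by_cases h : d % 4 = 3
  · left
    refine ⟨h, ?_, ?_⟩ <;>
    · have : om d = ((-(1/2) : ℝ) : ℂ) + ((Real.sqrt d / 2 : ℝ) : ℂ) * Complex.I := by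
        rw [om, if_pos h]; push_cast; ring
      rw [this]; simp
  · right
    refine ⟨h, ?_, ?_⟩ <;>
    · have : om d = ((0 : ℝ) : ℂ) + ((Real.sqrt d : ℝ) : ℂ) * Complex.I := by
        rw [om, if_neg h]; push_cast; ring
      rw [this]; simp

lemma om_im_pos (hd : d = 1 ∨ d = 2 ∨ d = 3 ∨ d = 7 ∨ d = 11) : 0 < (om d).im := by
  have h1 : (1:ℝ) ≤ d := by rcases hd with rfl|rfl|rfl|rfl|rfl <;> norm_num
  have : 0 < Real.sqrt d := Real.sqrt_pos.2 (by linarith)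
  rcases om_re_im hd with ⟨_, _, h⟩ | ⟨_, _, h⟩ <;> rw [h] <;> linarith

end helpers
section helpers2
variable {d : ℕ}

lemma om_conj (hd : d = 1 ∨ d = 2 ∨ d = 3 ∨ d = 7 ∨ d = 11) :
    ∃ k t : ℤ, om d ^ 2 = (k : ℂ) + (t : ℂ) * om d ∧
      (starRingEnd ℂ) (om d) = (t : ℂ) - om d := by
  have hs := sqc d
  have hI := Complex.I_sq
  rcases hd with rfl | rfl | rfl | rfl | rfl
  · exact ⟨-1, 0, by rw [om]; norm_num [Real.sqrt_one, Complex.I_sq],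
      by rw [om]; norm_num [Real.sqrt_one, map_mul, Complex.conj_I]⟩
  · exact ⟨-2, 0, by rw [om]; norm_num; linear_combination -hs + (Real.sqrt 2 : ℂ)^2 * hI,
      by rw [om]; norm_num [map_mul, Complex.conj_I, Complex.conj_ofReal]⟩
  · exact ⟨-1, -1, by rw [om]; norm_num; linear_combination (-1/4 : ℂ) * hs + (1/4) * (Real.sqrt 3 : ℂ)^2 * hI,
      by rw [om]; norm_num [map_div₀, map_add, map_mul, map_ofNat, Complex.conj_I, Complex.conj_ofReal]; ring⟩
  · exact ⟨-2, -1, by rw [om]; norm_num; linear_combination (-1/4 : ℂ) * hs + (1/4) * (Real.sqrt 7 : ℂ)^2 * hI,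
      by rw [om]; norm_num [map_div₀, map_add, map_mul, map_ofNat, Complex.conj_I, Complex.conj_ofReal]; ring⟩
  · exact ⟨-3, -1, by rw [om]; norm_num; linear_combination (-1/4 : ℂ) * hs + (1/4) * (Real.sqrt 11 : ℂ)^2 * hI,
      by rw [om]; norm_num [map_div₀, map_add, map_mul, map_ofNat, Complex.conj_I, Complex.conj_ofReal]; ring⟩

lemma Qd_inv (hd : d = 1 ∨ d = 2 ∨ d = 3 ∨ d = 7 ∨ d = 11)
    {x : ℂ} (hx : x ∈ Qd d) : x⁻¹ ∈ Qd d := by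
  rcases eq_or_ne x 0 with rfl | hx0
  · simpa using Qd_zero
  obtain ⟨k, t, hom, hconj⟩ := om_conj hd
  obtain ⟨a, b, rfl⟩ := hx
  set ξ : ℂ := (a : ℂ) + (b : ℂ) * om d with hξ
  have hcx : (starRingEnd ℂ) ξ = ((a : ℂ) + (b : ℂ) * t) - (b : ℂ) * om d := by
    simp [hξ, map_add, map_mul, hconj, Complex.conj_ofReal]; ring
  set q : ℚ := a ^ 2 + a * b * t - b ^ 2 * k with hq
  have hmul : ξ * (starRingEnd ℂ) ξ = (q : ℚ) := by
    rw [hcx, hξ]; push_cast [hq]; linear_combination (-(b:ℂ)^2) * hom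
  have hq0 : (q : ℂ) ≠ 0 := by
    rw [← hmul]
    exact mul_ne_zero hx0 (by simpa using star_ne_zero.mpr hx0)
  refine ⟨(a + b * t) / q, -b / q, ?_⟩
  have h2 : (((a + b * t) / q : ℚ) : ℂ) + ((-b / q : ℚ) : ℂ) * om d
      = (starRingEnd ℂ) ξ / (q : ℂ) := by
    rw [hcx]; push_cast; ring
  have h3 : ξ * ((((a + b * t) / q : ℚ) : ℂ) + ((-b / q : ℚ) : ℂ) * om d) = 1 := by
    rw [h2, ← mul_div_assoc, hmul, div_self hq0]
  exact inv_eq_of_mul_eq_one_right h3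

lemma Qd_inv' (hd : d = 1 ∨ d = 2 ∨ d = 3 ∨ d = 7 ∨ d = 11)
    {x : ℂ} (hx : (1 / x) ∈ Qd d) : x ∈ Qd d := by
  have := Qd_inv hd hx
  simpa using this
end helpers2
section geom
variable {d : ℕ}

lemma Kd_halfplane {z lam : ℂ} (h : ‖z‖ < ‖z - lam‖) :
    2 * (lam.re * z.re + lam.im * z.im) ≤ lam.re ^ 2 + lam.im ^ 2 := by
  have h4 : Complex.normSq z ≤ Complex.normSq (z - lam) := by
    rw [← Complex.sq_norm, ← Complex.sq_norm]
    exact pow_le_pow_left₀ (norm_nonneg z) h.le 2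
  simp only [Complex.normSq_apply, Complex.sub_re, Complex.sub_im] at h4
  nlinarith [h4]

set_option maxHeartbeats 1000000 in
lemma Kd_normSq_le (hd : d = 1 ∨ d = 2 ∨ d = 3 ∨ d = 7 ∨ d = 11)
    {z : ℂ} (hz : z ∈ Kd d) : Complex.normSq z ≤ 9 / 11 := by
  have key : ∀ lam : ℂ, lam ∈ Od d → lam ≠ 0 →
      2 * (lam.re * z.re + lam.im * z.im) ≤ lam.re ^ 2 + lam.im ^ 2 :=
    fun lam h1 h2 => Kd_halfplane (hz lam h1 h2)
  have hs2 : Real.sqrt d ^ 2 = (d : ℝ) := Real.sq_sqrt (by positivity)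
  have him := om_im_pos hd
  have h1m : (1:ℂ) ∈ Od d := Od_one
  have hom : om d ∈ Od d := ⟨0, 1, by push_cast; ring⟩
  have h1om : 1 + om d ∈ Od d := ⟨1, 1, by push_cast; ring⟩
  have hom0 : om d ≠ 0 := fun h => by simp [h] at him
  set x := z.re
  set y := z.im
  set s := Real.sqrt d with hsdef
  have k1 := key 1 h1m one_ne_zero
  have k2 := key (-1) (Od_neg h1m) (by norm_num)
  have k3 := key (om d) hom hom0
  have k4 := key (-om d) (Od_neg hom) (neg_ne_zero.2 hom0)
  simp only [Complex.one_re, Complex.one_im, Complex.neg_re, Complex.neg_im] at k1 k2 k3 k4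
  rw [Complex.normSq_apply]
  rcases om_re_im hd with ⟨hmod, hre, him'⟩ | ⟨hmod, hre, him'⟩
  · -- d % 4 = 3 : d ∈ {3, 7, 11}
    have hd3 : (3:ℝ) ≤ d ∧ (d:ℝ) ≤ 11 := by
      rcases hd with rfl|rfl|rfl|rfl|rfl <;> norm_num at hmod <;> norm_num
    have h1om0 : 1 + om d ≠ 0 := fun h => by
      have h' := congrArg Complex.im h
      simp only [Complex.add_im, Complex.one_im, Complex.zero_im, zero_add] at h'
      linarith
    have k5 := key (1 + om d) h1om h1om0
    have k6 := key (-(1 + om d)) (Od_neg h1om) (neg_ne_zero.2 h1om0)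
    simp only [Complex.add_re, Complex.add_im, Complex.neg_re, Complex.neg_im,
      Complex.one_re, Complex.one_im, hre, him'] at k3 k4 k5 k6
    ring_nf at k1 k2 k3 k4 k5 k6
    -- now: derive |x| ≤ 1/2 and s|y| ≤ (s^2+1)/4 - |x|
    have hxa : |x| ≤ 1/2 := abs_le.2 ⟨by linarith, by linarith⟩
    have hup : s * y ≤ (s^2 + 1)/4 - |x| := by
      rcases abs_cases x with ⟨he, _⟩ | ⟨he, _⟩ <;> rw [he] <;> linarith [k3, k5]
    have hlo : -((s^2 + 1)/4 - |x|) ≤ s * y := by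
      rcases abs_cases x with ⟨he, _⟩ | ⟨he, _⟩ <;> rw [he] <;> linarith [k4, k6]
    have h6 : (s * y)^2 ≤ ((s^2 + 1)/4 - |x|)^2 := sq_le_sq' hlo hup
    have hs3 : (3:ℝ) ≤ s^2 := by rw [hs2]; exact hd3.1
    have hs11 : s^2 ≤ 11 := by rw [hs2]; exact hd3.2
    have habs : 0 ≤ |x| := abs_nonneg x
    have hP : 0 ≤ |x| * ((s^2 + 1) * (1/2 - |x|)) :=
      mul_nonneg habs (mul_nonneg (by nlinarith) (by linarith))
    have hB : s^2 * x^2 + ((s^2 + 1)/4 - |x|)^2 ≤ ((s^2 + 1)/4)^2 := by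
      nlinarith [hP, _root_.sq_abs x]
    have hC : ((s^2 + 1)/4)^2 ≤ 9 * s^2 / 11 := by
      nlinarith [mul_nonneg (by linarith : (0:ℝ) ≤ 11 - s^2) (by linarith : (0:ℝ) ≤ s^2 - 3)]
    have h7 : s^2 * (x^2 + y^2) ≤ 9 * s^2 / 11 := by nlinarith [h6, hB, hC]
    have h8 : (0:ℝ) < s^2 := by linarith
    nlinarith [h7, h8]
  · -- d ∈ {1, 2}
    have hd2 : (1:ℝ) ≤ d ∧ (d:ℝ) ≤ 2 := by
      rcases hd with rfl|rfl|rfl|rfl|rfl <;> norm_num at hmod <;> norm_num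
    simp only [hre, him'] at k3 k4
    ring_nf at k1 k2 k3 k4
    have hs1 : (1:ℝ) ≤ s^2 := by rw [hs2]; exact hd2.1
    have hs2' : s^2 ≤ 2 := by rw [hs2]; exact hd2.2
    have h6 : (s * y)^2 ≤ (s^2/2)^2 := sq_le_sq' (by linarith [k4]) (by linarith [k3])
    have h8 : (0:ℝ) < s^2 := by linarith
    have hx2 : x^2 ≤ 1/4 := by nlinarith [k1, k2]
    have hy2 : y^2 ≤ 1/2 := by nlinarith [h6, hs1, hs2', h8, sq_nonneg y]
    nlinarith [hx2, hy2]

end geom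
section minnorm
variable {d : ℕ}

lemma Od_normSq_ge (hd : d = 1 ∨ d = 2 ∨ d = 3 ∨ d = 7 ∨ d = 11)
    {lam : ℂ} (hl : lam ∈ Od d) (h0 : lam ≠ 0) : 3 / 4 ≤ Complex.normSq lam := by
  obtain ⟨n, m, rfl⟩ := hl
  have hs2 : Real.sqrt d ^ 2 = (d : ℝ) := Real.sq_sqrt (by positivity)
  have hre : ((n : ℂ) + (m : ℂ) * om d).re = (n : ℝ) + (m : ℝ) * (om d).re := by simp
  have him : ((n : ℂ) + (m : ℂ) * om d).im = (m : ℝ) * (om d).im := by simp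
  rw [Complex.normSq_apply, hre, him]
  rcases eq_or_ne m 0 with rfl | hm
  · have hn : n ≠ 0 := by
      rintro rfl; apply h0; push_cast; ring
    have h1 : (1:ℝ) ≤ |(n:ℝ)| := by
      rw [← Int.cast_abs]; exact_mod_cast Int.one_le_abs hn
    have := _root_.sq_abs (n:ℝ)
    push_cast
    nlinarith [h1]
  · have h1 : (1:ℝ) ≤ |(m:ℝ)| := by
      rw [← Int.cast_abs]; exact_mod_cast Int.one_le_abs hm
    have hd1 : (1:ℝ) ≤ d := by rcases hd with rfl|rfl|rfl|rfl|rfl <;> norm_num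
    rcases om_re_im hd with ⟨hmod, _, him'⟩ | ⟨hmod, _, him'⟩
    · have hd3 : (3:ℝ) ≤ d := by
        rcases hd with rfl|rfl|rfl|rfl|rfl <;> norm_num at hmod <;> norm_num
      rw [him']
      nlinarith [sq_nonneg ((n:ℝ) + (m:ℝ) * (om d).re), _root_.sq_abs (m:ℝ), h1, hs2, hd3]
    · rw [him']
      nlinarith [sq_nonneg ((n:ℝ) + (m:ℝ) * (om d).re), _root_.sq_abs (m:ℝ), h1, hs2, hd1]

/-- radius bound -/
lemma abs_le_rho (hd : d = 1 ∨ d = 2 ∨ d = 3 ∨ d = 7 ∨ d = 11)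
    {w : ℂ} (hw : w ∈ closure (Kd d)) : ‖w‖ ≤ Real.sqrt (9/11) := by
  have hsub : Kd d ⊆ Metric.closedBall 0 (Real.sqrt (9/11)) := by
    intro u hu
    rw [Metric.mem_closedBall, dist_zero_right,
      ← Real.sqrt_sq (norm_nonneg u)]
    apply Real.sqrt_le_sqrt
    have := Kd_normSq_le hd hu
    rw [← Complex.sq_norm] at this
    nlinarith [this]
  have h2 := closure_minimal hsub Metric.isClosed_closedBall hw
  rw [Metric.mem_closedBall, dist_zero_right] at h2
  exact h2

end minnorm
section cf
variable {d : ℕ} {fl : ℂ → ℂ} {z : ℂ}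

lemma Od_abs_ge (hd : d = 1 ∨ d = 2 ∨ d = 3 ∨ d = 7 ∨ d = 11)
    {lam : ℂ} (hl : lam ∈ Od d) (h0 : lam ≠ 0) :
    Real.sqrt (3/4) ≤ ‖lam‖ := by
  rw [Complex.norm_def]
  exact Real.sqrt_le_sqrt (Od_normSq_ge hd hl h0)

lemma rho_lt_one : Real.sqrt (9/11) < 1 := by
  rw [show (1:ℝ) = Real.sqrt 1 by simp]
  exact Real.sqrt_lt_sqrt (by norm_num) (by norm_num)

lemma c_pos : (0:ℝ) < Real.sqrt (3/4) := Real.sqrt_pos.2 (by norm_num)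

-- recurrences
lemma pconv_zero : pconv fl z 0 = 0 := by simp [pconv, convAux, aseq]
lemma qconv_zero : qconv fl z 0 = 1 := by simp [qconv, convAux, aseq]
lemma pprev_zero : pprev fl z 0 = 1 := by simp [pprev, convAux]
lemma qprev_zero : qprev fl z 0 = 0 := by simp [qprev, convAux]

lemma pconv_succ (n : ℕ) :
    pconv fl z (n+1) = aseq fl z (n+1) * pconv fl z n + pprev fl z n := rfl
lemma qconv_succ (n : ℕ) :
    qconv fl z (n+1) = aseq fl z (n+1) * qconv fl z n + qprev fl z n := rfl
lemma pprev_succ (n : ℕ) : pprev fl z (n+1) = pconv fl z n := rfl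
lemma qprev_succ (n : ℕ) : qprev fl z (n+1) = qconv fl z n := rfl

lemma aseq_mem (hfl_mem : ∀ w : ℂ, fl w ∈ Od d) (k : ℕ) : aseq fl z k ∈ Od d := by
  rcases k with _ | k
  · simpa [aseq] using Od_zero
  · simp only [aseq, digit]
    split
    · exact Od_zero
    · exact hfl_mem _

lemma conv_mem (hd : d = 1 ∨ d = 2 ∨ d = 3 ∨ d = 7 ∨ d = 11)
    (hfl_mem : ∀ w : ℂ, fl w ∈ Od d) (n : ℕ) :
    pconv fl z n ∈ Od d ∧ qconv fl z n ∈ Od d ∧ pprev fl z n ∈ Od d ∧ qprev fl z n ∈ Od d := by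
  induction n with
  | zero => exact ⟨by rw [pconv_zero]; exact Od_zero, by rw [qconv_zero]; exact Od_one,
      by rw [pprev_zero]; exact Od_one, by rw [qprev_zero]; exact Od_zero⟩
  | succ n ih =>
    obtain ⟨h1, h2, h3, h4⟩ := ih
    refine ⟨?_, ?_, ?_, ?_⟩
    · rw [pconv_succ]; exact Od_add (Od_mul hd (aseq_mem hfl_mem _) h1) h3
    · rw [qconv_succ]; exact Od_add (Od_mul hd (aseq_mem hfl_mem _) h2) h4
    · rw [pprev_succ]; exact h1
    · rw [qprev_succ]; exact h2

/-- if some iterate is in `Qd` then `z` is -/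
lemma z_rat_of_iter (hd : d = 1 ∨ d = 2 ∨ d = 3 ∨ d = 7 ∨ d = 11)
    (hfl_mem : ∀ w : ℂ, fl w ∈ Od d) :
    ∀ n, (gauss fl)^[n] z ∈ Qd d → z ∈ Qd d := by
  intro n
  induction n with
  | zero => simp
  | succ n ih =>
    intro h
    rw [Function.iterate_succ_apply'] at h
    rcases eq_or_ne ((gauss fl)^[n] z) 0 with h0 | h0
    · exact ih (by rw [h0]; exact Qd_zero)
    · rw [gauss, if_neg h0] at h
      have h2 : 1 / (gauss fl)^[n] z ∈ Qd d := by
        have := Qd_add h (Od_subset_Qd (hfl_mem (1 / (gauss fl)^[n] z)))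
        simpa using this
      exact ih (by simpa using Qd_inv hd h2)

lemma iter_ne_zero (hd : d = 1 ∨ d = 2 ∨ d = 3 ∨ d = 7 ∨ d = 11)
    (hfl_mem : ∀ w : ℂ, fl w ∈ Od d) (hirr : z ∉ Qd d) (n : ℕ) :
    (gauss fl)^[n] z ≠ 0 := fun h =>
  hirr (z_rat_of_iter hd hfl_mem n (by rw [h]; exact Qd_zero))

lemma iter_abs_le (hd : d = 1 ∨ d = 2 ∨ d = 3 ∨ d = 7 ∨ d = 11)
    (hfl_near : ∀ w : ℂ, w - fl w ∈ closure (Kd d)) (hz : z ∈ Kd d) (n : ℕ) :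
    ‖(gauss fl)^[n] z‖ ≤ Real.sqrt (9/11) := by
  rcases n with _ | n
  · exact abs_le_rho hd (subset_closure hz)
  · rw [Function.iterate_succ_apply', gauss]
    split
    · rw [norm_zero]; positivity
    · exact abs_le_rho hd (hfl_near _)

end cf
section erec
variable {d : ℕ} {fl : ℂ → ℂ} {z : ℂ}

lemma aseq_succ_eq (n : ℕ) : aseq fl z (n+1) = fl (1 / (gauss fl)^[n] z) := by
  simp [aseq, digit]

lemma E_step (hd : d = 1 ∨ d = 2 ∨ d = 3 ∨ d = 7 ∨ d = 11)
    (hfl_mem : ∀ w : ℂ, fl w ∈ Od d) (hirr : z ∉ Qd d) : ∀ n : ℕ,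
    qconv fl z n * z - pconv fl z n
      = -((gauss fl)^[n] z) * (qprev fl z n * z - pprev fl z n) := by
  intro n
  induction n with
  | zero =>
    rw [pconv_zero, qconv_zero, pprev_zero, qprev_zero, Function.iterate_zero_apply]
    ring
  | succ n ih =>
    have hZn : (gauss fl)^[n] z ≠ 0 := iter_ne_zero hd hfl_mem hirr n
    rw [pconv_succ, qconv_succ, pprev_succ, qprev_succ, aseq_succ_eq,
      Function.iterate_succ_apply', gauss, if_neg hZn]
    field_simp
    linear_combination ih
end erec
section main
variable {d : ℕ} {fl : ℂ → ℂ} {z : ℂ}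

lemma E_zero : qconv fl z 0 * z - pconv fl z 0 = z := by
  rw [pconv_zero, qconv_zero]; ring

lemma E_succ' (hd : d = 1 ∨ d = 2 ∨ d = 3 ∨ d = 7 ∨ d = 11)
    (hfl_mem : ∀ w : ℂ, fl w ∈ Od d) (hirr : z ∉ Qd d) (n : ℕ) :
    qconv fl z (n+1) * z - pconv fl z (n+1)
      = -((gauss fl)^[n+1] z) * (qconv fl z n * z - pconv fl z n) := by
  have := E_step hd hfl_mem hirr (n+1)
  rwa [qprev_succ, pprev_succ] at this

lemma E_abs_le (hd : d = 1 ∨ d = 2 ∨ d = 3 ∨ d = 7 ∨ d = 11)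
    (hfl_mem : ∀ w : ℂ, fl w ∈ Od d)
    (hfl_near : ∀ w : ℂ, w - fl w ∈ closure (Kd d))
    (hz : z ∈ Kd d) (hirr : z ∉ Qd d) (n : ℕ) :
    ‖qconv fl z n * z - pconv fl z n‖ ≤ Real.sqrt (9/11) ^ (n+1) := by
  induction n with
  | zero =>
    rw [E_zero, pow_one]
    simpa using iter_abs_le hd hfl_near hz 0
  | succ n ih =>
    rw [E_succ' hd hfl_mem hirr n, norm_mul, norm_neg]
    calc ‖(gauss fl)^[n+1] z‖ * ‖qconv fl z n * z - pconv fl z n‖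
        ≤ Real.sqrt (9/11) * Real.sqrt (9/11) ^ (n+1) :=
          mul_le_mul (iter_abs_le hd hfl_near hz (n+1)) ih (norm_nonneg _)
            (Real.sqrt_nonneg _)
      _ = Real.sqrt (9/11) ^ (n+2) := by ring

lemma E_ne_zero (hd : d = 1 ∨ d = 2 ∨ d = 3 ∨ d = 7 ∨ d = 11)
    (hfl_mem : ∀ w : ℂ, fl w ∈ Od d) (hirr : z ∉ Qd d) (n : ℕ) :
    qconv fl z n * z - pconv fl z n ≠ 0 := by
  induction n with
  | zero => rw [E_zero]; exact fun h => hirr (h ▸ Qd_zero)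
  | succ n ih =>
    rw [E_succ' hd hfl_mem hirr n]
    exact mul_ne_zero (neg_ne_zero.2 (iter_ne_zero hd hfl_mem hirr (n+1))) ih

end main

/-- (i) for irrational `z ∈ K_d` the convergents `p_n/q_n`
converge to `z`; (ii) for `z ∈ K_d ∩ ℚ(√-d)` the algorithm stops in finitely
many steps. -/
theorem convergents_converge_and_rationals_terminate
    (d : ℕ) (hd : d = 1 ∨ d = 2 ∨ d = 3 ∨ d = 7 ∨ d = 11)
    (fl : ℂ → ℂ) (hfl_meas : Measurable fl)
    (hfl_mem : ∀ z : ℂ, fl z ∈ Od d)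
    (hfl_near : ∀ z : ℂ, z - fl z ∈ closure (Kd d))
    (z : ℂ) (hz : z ∈ Kd d) :
    (z ∉ Qd d →
      Tendsto (fun n : ℕ => pconv fl z n / qconv fl z n) atTop (𝓝 z)) ∧
    (z ∈ Qd d → ∃ n : ℕ, (gauss fl)^[n] z = 0) := by
  set ρ : ℝ := Real.sqrt (9/11) with hρdef
  set c : ℝ := Real.sqrt (3/4) with hcdef
  have hρ0 : 0 ≤ ρ := Real.sqrt_nonneg _
  have hρ1 : ρ < 1 := rho_lt_one
  have hc0 : (0:ℝ) < c := c_pos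
  constructor
  · -- part (i)
    intro hirr
    have htend : Tendsto (fun n : ℕ => ρ ^ (n+1) / c) atTop (𝓝 0) := by
      have h1 : Tendsto (fun n : ℕ => ρ ^ (n+1)) atTop (𝓝 0) :=
        (tendsto_pow_atTop_nhds_zero_of_lt_one hρ0 hρ1).comp (tendsto_add_atTop_nat 1)
      simpa using h1.div_const c
    have hev : ∀ᶠ n : ℕ in atTop, ρ ^ (n+1) < c := by
      have h1 : Tendsto (fun n : ℕ => ρ ^ (n+1)) atTop (𝓝 0) :=
        (tendsto_pow_atTop_nhds_zero_of_lt_one hρ0 hρ1).comp (tendsto_add_atTop_nat 1)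
      exact h1.eventually_lt_const hc0
    rw [tendsto_iff_dist_tendsto_zero]
    apply squeeze_zero' (Eventually.of_forall fun n => dist_nonneg)
      ?_ htend
    filter_upwards [hev] with n hn
    have hEb := E_abs_le hd hfl_mem hfl_near hz hirr n
    have hq : qconv fl z n ≠ 0 := by
      intro hq0
      have hE := E_ne_zero hd hfl_mem hirr n
      rw [hq0] at hE hEb
      have hp : pconv fl z n ≠ 0 := by
        intro h; rw [h] at hE; simp at hE
      have hcle : c ≤ ‖pconv fl z n‖ :=
        Od_abs_ge hd (conv_mem hd hfl_mem n).1 hp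
      rw [show (0:ℂ) * z - pconv fl z n = -(pconv fl z n) by ring, norm_neg] at hEb
      linarith
    have hqc : c ≤ ‖qconv fl z n‖ :=
      Od_abs_ge hd (conv_mem hd hfl_mem n).2.1 hq
    have hdiv : pconv fl z n / qconv fl z n - z
        = -(qconv fl z n * z - pconv fl z n) / qconv fl z n := by
      field_simp
      ring
    have hdist : dist (pconv fl z n / qconv fl z n) z
        = ‖qconv fl z n * z - pconv fl z n‖ / ‖qconv fl z n‖ := by
      rw [Complex.dist_eq, hdiv, norm_div, norm_neg]
    rw [hdist]
    exact div_le_div₀ (pow_nonneg hρ0 _) hEb hc0 hqc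
  · -- part (ii)
    intro hrat
    by_contra hcon
    push_neg at hcon
    obtain ⟨a, b, hab⟩ := hrat
    have hz0 : z ≠ 0 := by simpa using hcon 0
    -- initial numerator and denominator
    set u₀ : ℂ := ((a.num * (b.den:ℤ) : ℤ) : ℂ) + ((b.num * (a.den:ℤ) : ℤ) : ℂ) * om d with hu₀
    set v₀ : ℂ := (((a.den : ℤ) * (b.den : ℤ) : ℤ) : ℂ) with hv₀
    have had : ((a.den : ℤ) : ℂ) ≠ 0 := by exact_mod_cast (by exact_mod_cast a.den_nz : ((a.den:ℤ)) ≠ 0)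
    have hbd : ((b.den : ℤ) : ℂ) ≠ 0 := by exact_mod_cast (by exact_mod_cast b.den_nz : ((b.den:ℤ)) ≠ 0)
    have hv₀0 : v₀ ≠ 0 := by
      rw [hv₀]; push_cast; exact mul_ne_zero had hbd
    have hzrep : z = u₀ / v₀ := by
      rw [hab, hu₀, hv₀]
      rw [Rat.cast_def, Rat.cast_def]
      push_cast
      field_simp
    have hu₀0 : u₀ ≠ 0 := by
      intro h; apply hz0; rw [hzrep, h, zero_div]
    have hu₀m : u₀ ∈ Od d := ⟨a.num * (b.den:ℤ), b.num * (a.den:ℤ), rfl⟩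
    have hv₀m : v₀ ∈ Od d := ⟨(a.den : ℤ) * (b.den : ℤ), 0, by rw [hv₀]; push_cast; ring⟩
    set C : ℝ := ‖u₀‖ with hC
    have hC0 : 0 < C := by
      rw [hC]; exact norm_pos_iff.mpr hu₀0
    have main : ∀ k : ℕ, ∃ u v : ℂ, u ∈ Od d ∧ v ∈ Od d ∧ u ≠ 0 ∧ v ≠ 0 ∧
        (gauss fl)^[k] z = u / v ∧ ‖u‖ ≤ ρ ^ k * C := by
      intro k
      induction k with
      | zero => exact ⟨u₀, v₀, hu₀m, hv₀m, hu₀0, hv₀0, by simpa using hzrep, by simp [hC]⟩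
      | succ k ih =>
        obtain ⟨u, v, hum, hvm, hu0, hv0, hrep, hbound⟩ := ih
        have hZk : (gauss fl)^[k] z ≠ 0 := hcon k
        set a' : ℂ := fl (1 / (gauss fl)^[k] z) with ha'
        have h1u : (1 : ℂ) / ((gauss fl)^[k] z) = v / u := by
          rw [hrep, one_div, inv_div]
        have hstep : (gauss fl)^[k+1] z = (v - a' * u) / u := by
          rw [Function.iterate_succ_apply', gauss, if_neg hZk, ← ha', h1u]
          field_simp
        have hmem : v - a' * u ∈ Od d := Od_sub hd hvm (Od_mul hd (hfl_mem _) hum)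
        have hne : v - a' * u ≠ 0 := by
          intro h
          apply hcon (k+1)
          rw [hstep, h, zero_div]
        have habs : ‖(gauss fl)^[k+1] z‖ ≤ ρ := by
          rw [Function.iterate_succ_apply', gauss, if_neg hZk]
          exact abs_le_rho hd (hfl_near _)
        have hval : ‖v - a' * u‖ = ‖(gauss fl)^[k+1] z‖ * ‖u‖ := by
          rw [hstep, norm_div, div_mul_cancel₀ _ (norm_ne_zero_iff.mpr hu0)]
        refine ⟨v - a' * u, u, hmem, hum, hne, hu0, hstep, ?_⟩
        rw [hval]
        calc ‖(gauss fl)^[k+1] z‖ * ‖u‖ ≤ ρ * (ρ ^ k * C) :=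
              mul_le_mul habs hbound (norm_nonneg _) hρ0
          _ = ρ ^ (k+1) * C := by ring
    -- contradiction
    obtain ⟨N, hN⟩ : ∃ N : ℕ, ρ ^ N * C < c := by
      obtain ⟨N, hN⟩ := exists_pow_lt_of_lt_one (div_pos hc0 hC0) hρ1
      exact ⟨N, by rw [← lt_div_iff₀ hC0] at *; exact hN⟩
    obtain ⟨u, v, hum, hvm, hu0, hv0, hrep, hbound⟩ := main N
    have := Od_abs_ge hd hum hu0
    linarith


end
end

section
/- Let d ∈ {1,2,3,7,11}. There exist a real number r_d > 1 and a natural number M_d such that for every z ∈ K_d with z ∉ ℚ(√−d) there exists a strictly increasing sequence of positive integers (n_k)_{k∈ℕ} satisfying 1 ≤ n_{k+1} − n_k ≤ M_d and |q_{n_k}| ≥ r_d · |q_{n_k − 1}| for all k ∈ ℕ, where (q_n) are the denominators of the convergents of the nearest-integer 𝔬_d-continued fraction expansion of z. -/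
open MeasureTheory Filter Topology

noncomputable section

-- ========== auxiliary development ==========
namespace CF
variable (fl : ℂ → ℂ) (z : ℂ)

lemma pconv_succ (n : ℕ) : pconv fl z (n+1) = aseq fl z (n+1) * pconv fl z n + pprev fl z n := rfl
lemma qconv_succ (n : ℕ) : qconv fl z (n+1) = aseq fl z (n+1) * qconv fl z n + qprev fl z n := rfl
lemma pprev_succ (n : ℕ) : pprev fl z (n+1) = pconv fl z n := rfl
lemma qprev_succ (n : ℕ) : qprev fl z (n+1) = qconv fl z n := rfl
lemma pconv_zero : pconv fl z 0 = 0 := by simp [pconv, convAux, aseq]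
lemma qconv_zero : qconv fl z 0 = 1 := by simp [qconv, convAux, aseq]
lemma pprev_zero : pprev fl z 0 = 1 := rfl
lemma qprev_zero : qprev fl z 0 = 0 := rfl
def Xc (n : ℕ) : ℂ := qconv fl z n * z - pconv fl z n
def Xp (n : ℕ) : ℂ := qprev fl z n * z - pprev fl z n
lemma Xp_succ (n : ℕ) : Xp fl z (n+1) = Xc fl z n := by
  simp [Xp, Xc, pprev_succ, qprev_succ]
lemma Xp_zero : Xp fl z 0 = -1 := by simp [Xp, pprev_zero, qprev_zero]

-- ===== new material =====
/-- `w_n = G^n z`. -/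
def W (n : ℕ) : ℂ := (gauss fl)^[n] z

lemma W_zero : W fl z 0 = z := rfl

lemma W_succ (n : ℕ) : W fl z (n+1) = gauss fl (W fl z n) := by
  simp [W, Function.iterate_succ_apply']

lemma aseq_succ (n : ℕ) : aseq fl z (n+1) = fl (1 / W fl z n) := by
  simp [aseq, digit, W]

lemma digit_rel (n : ℕ) (hW : W fl z n ≠ 0) :
    aseq fl z (n+1) = 1 / W fl z n - W fl z (n+1) := by
  rw [aseq_succ, W_succ, gauss, if_neg hW]; ring

lemma Xc_succ (n : ℕ) :
    Xc fl z (n+1) = aseq fl z (n+1) * Xc fl z n + Xp fl z n := by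
  simp only [Xc, Xp, pconv_succ, qconv_succ]; ring

lemma Xc_zero : Xc fl z 0 = z := by simp [Xc, pconv_zero, qconv_zero]

lemma Xc_eq (n : ℕ) (hW : ∀ k < n, W fl z k ≠ 0) :
    Xc fl z n = - W fl z n * Xp fl z n := by
  induction n with
  | zero => simp [Xc_zero, Xp_zero, W_zero]
  | succ n ih =>
      have hWn : W fl z n ≠ 0 := hW n (Nat.lt_succ_self n)
      have ih' : Xc fl z n = - W fl z n * Xp fl z n :=
        ih (fun k hk => hW k (hk.trans (Nat.lt_succ_self n)))
      rw [Xc_succ, digit_rel fl z n hWn, Xp_succ, ih']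
      field_simp
      ring



lemma det_eq (fl : ℂ → ℂ) (z : ℂ) (n : ℕ) :
    pconv fl z n * qprev fl z n - pprev fl z n * qconv fl z n = (-1)^(n+1) := by
  induction n with
  | zero => simp [pconv_zero, qconv_zero, pprev_zero, qprev_zero]
  | succ n ih =>
      rw [pconv_succ, qconv_succ, pprev_succ, qprev_succ, pow_succ]
      ring_nf
      ring_nf at ih
      linear_combination (-1 : ℂ) * ih

lemma wronskian (fl : ℂ → ℂ) (z : ℂ) (n : ℕ) :
    qconv fl z n * Xp fl z n - qprev fl z n * Xc fl z n = (-1)^(n+1) := by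
  have h := det_eq fl z n
  simp only [Xp, Xc]
  linear_combination h

def sD (d : ℕ) : ℤ := if d % 4 = 3 then -1 else 0
def tD (d : ℕ) : ℤ := if d % 4 = 3 then -(((d:ℤ)+1)/4) else -(d:ℤ)

lemma om_sq (d : ℕ) (hd : d = 1 ∨ d = 2 ∨ d = 3 ∨ d = 7 ∨ d = 11) :
    om d ^ 2 = (tD d : ℂ) + (sD d : ℂ) * om d := by
  have hd0 : (0:ℝ) ≤ (d:ℝ) := by positivity
  have hsq : ((Real.sqrt d : ℝ) : ℂ)^2 = (d:ℂ) := by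
    norm_cast
    exact_mod_cast Real.sq_sqrt hd0
  have hI : (Complex.I)^2 = -1 := Complex.I_sq
  rcases hd with h|h|h|h|h <;> subst h <;> simp only [om, sD, tD] <;> norm_num
  · linear_combination (2:ℂ) * hI + Complex.I^2 * hsq
  · linear_combination (3/4:ℂ) * hI + (Complex.I^2/4) * hsq
  · linear_combination (7/4:ℂ) * hI + (Complex.I^2/4) * hsq
  · linear_combination (11/4:ℂ) * hI + (Complex.I^2/4) * hsq

lemma om_conj (d : ℕ) : (starRingEnd ℂ) (om d) = (sD d : ℂ) - om d := by
  by_cases h : d % 4 = 3 <;>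
    simp [om, sD, h, map_div₀, map_add, map_mul, map_ofNat, Complex.conj_I,
      Complex.conj_ofReal] <;> ring

lemma Od_add {d : ℕ} {x y : ℂ} (hx : x ∈ Od d) (hy : y ∈ Od d) : x + y ∈ Od d := by
  obtain ⟨n1, m1, rfl⟩ := hx; obtain ⟨n2, m2, rfl⟩ := hy
  exact ⟨n1 + n2, m1 + m2, by push_cast; ring⟩

lemma Od_mul {d : ℕ} (hd : d = 1 ∨ d = 2 ∨ d = 3 ∨ d = 7 ∨ d = 11)
    {x y : ℂ} (hx : x ∈ Od d) (hy : y ∈ Od d) : x * y ∈ Od d := by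
  obtain ⟨n1, m1, rfl⟩ := hx; obtain ⟨n2, m2, rfl⟩ := hy
  refine ⟨n1*n2 + m1*m2*tD d, n1*m2 + m1*n2 + m1*m2*sD d, ?_⟩
  push_cast
  linear_combination ((m1:ℂ) * m2) * om_sq d hd

lemma Od_zero (d : ℕ) : (0:ℂ) ∈ Od d := ⟨0, 0, by simp⟩
lemma Od_one (d : ℕ) : (1:ℂ) ∈ Od d := ⟨1, 0, by simp⟩

/-- ratio of elements of `Od` lies in `Qd`. -/
lemma mem_Qd_of_ratio {d : ℕ} (hd : d = 1 ∨ d = 2 ∨ d = 3 ∨ d = 7 ∨ d = 11)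
    {p q z : ℂ} (hp : p ∈ Od d) (hq : q ∈ Od d) (hq0 : q ≠ 0)
    (h : q * z = p) : z ∈ Qd d := by
  obtain ⟨np, mp, rfl⟩ := hp
  obtain ⟨nq, mq, rfl⟩ := hq
  have hw2 : om d ^ 2 = (tD d : ℂ) + (sD d : ℂ) * om d := om_sq d hd
  have hNq : (((nq^2 + sD d * nq * mq - tD d * mq^2 : ℤ)):ℂ)
      = ((nq:ℂ) + mq * om d) * (starRingEnd ℂ) ((nq:ℂ) + mq * om d) := by
    rw [map_add, map_mul, om_conj d, map_intCast, map_intCast]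
    push_cast
    linear_combination ((mq:ℂ)^2) * hw2
  have hN0 : ((nq^2 + sD d * nq * mq - tD d * mq^2 : ℤ) : ℂ) ≠ 0 := by
    intro h0
    apply hq0
    have h2 : ((nq:ℂ) + mq * om d) * (starRingEnd ℂ) ((nq:ℂ) + mq * om d) = 0 := by
      rw [← hNq]; exact h0
    rcases mul_eq_zero.1 h2 with h1 | h1
    · exact h1
    · simpa using congrArg (starRingEnd ℂ) h1
  have key : ((nq:ℂ) + mq * om d) *
      (((np*nq + sD d * np * mq - tD d * mp * mq : ℤ):ℂ)
        + ((mp*nq - np*mq : ℤ):ℂ) * om d)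
      = ((nq^2 + sD d * nq * mq - tD d * mq^2 : ℤ):ℂ) * ((np:ℂ) + mp * om d) := by
    push_cast
    linear_combination ((mq:ℂ) * ((mp:ℂ)*nq - (np:ℂ)*mq)) * hw2
  refine ⟨((np*nq + sD d * np * mq - tD d * mp * mq : ℤ):ℚ)
      / ((nq^2 + sD d * nq * mq - tD d * mq^2 : ℤ):ℚ),
      ((mp*nq - np*mq : ℤ):ℚ) / ((nq^2 + sD d * nq * mq - tD d * mq^2 : ℤ):ℚ), ?_⟩
  have hq0' : (nq:ℂ) + mq * om d ≠ 0 := hq0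
  apply mul_left_cancel₀ hq0'
  rw [h]
  have hNQ : (((nq^2 + sD d * nq * mq - tD d * mq^2 : ℤ):ℚ):ℂ) ≠ 0 := by
    intro h0; apply hN0; exact_mod_cast h0
  push_cast at hNQ key ⊢
  rw [div_eq_mul_inv, div_eq_mul_inv]
  linear_combination -((↑nq ^ 2 + ↑(sD d) * ↑nq * ↑mq - ↑(tD d) * ↑mq ^ 2 : ℂ))⁻¹ * key - ((np:ℂ) + mp * om d) * mul_inv_cancel₀ hNQ


lemma closure_constraint {d : ℕ} {w lam : ℂ} (hw : w ∈ closure (Kd d))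
    (hlam : lam ∈ Od d) (h0 : lam ≠ 0) : ‖w‖ ≤ ‖w - lam‖ := by
  have hsub : closure (Kd d) ⊆ {z | ‖z‖ ≤ ‖z - lam‖} := by
    apply closure_minimal
    · intro z hz; exact le_of_lt (hz lam hlam h0)
    · apply isClosed_le
      · exact continuous_norm
      · exact continuous_norm.comp (continuous_id.sub continuous_const)
  exact hsub hw

lemma key_ineq {d : ℕ} {w lam : ℂ} (hw : w ∈ closure (Kd d))
    (hlam : lam ∈ Od d) (h0 : lam ≠ 0) :
    2*(w.re*lam.re + w.im*lam.im) ≤ lam.re^2 + lam.im^2 := by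
  have h := closure_constraint hw hlam h0
  have h2 : (‖w‖)^2 ≤ (‖w - lam‖)^2 := by
    exact pow_le_pow_left₀ (norm_nonneg w) h 2
  rw [Complex.sq_norm, Complex.sq_norm, Complex.normSq_apply, Complex.normSq_apply] at h2
  simp only [Complex.sub_re, Complex.sub_im] at h2
  nlinarith [h2]

lemma sqrt_sq_eq (d : ℕ) : (Real.sqrt d)^2 = (d:ℝ) := Real.sq_sqrt (by positivity)

lemma odd_facts {d : ℕ} (h4 : d % 4 = 3) {w : ℂ} (hw : w ∈ closure (Kd d)) :
    0 ≤ 1/2 - w.re ∧ 0 ≤ 1/2 + w.re ∧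
    0 ≤ (1+(Real.sqrt d)^2)/4 - w.re - Real.sqrt d * w.im ∧
    0 ≤ (1+(Real.sqrt d)^2)/4 - w.re + Real.sqrt d * w.im ∧
    0 ≤ (1+(Real.sqrt d)^2)/4 + w.re - Real.sqrt d * w.im ∧
    0 ≤ (1+(Real.sqrt d)^2)/4 + w.re + Real.sqrt d * w.im := by
  have hd0 : 0 < d := by omega
  have hs0 : (0:ℝ) < Real.sqrt d := Real.sqrt_pos.2 (by exact_mod_cast hd0)
  set s := Real.sqrt d with hsdef
  have hom : om d = ((-1:ℝ):ℂ)/2 + Complex.I * ((s:ℝ):ℂ)/2 := by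
    simp [om, h4, hsdef]; push_cast; ring
  have hre : (om d).re = -(1/2) := by rw [hom]; simp; norm_num
  have him : (om d).im = s/2 := by rw [hom]; simp
  have hom0 : om d ≠ 0 := by
    intro hh
    have h2 := congrArg Complex.im hh
    rw [him] at h2
    simp at h2
    exact hs0.ne' h2
  have hom1 : (1:ℂ) + om d ≠ 0 := by
    intro hh
    have h2 := congrArg Complex.im hh
    rw [Complex.add_im, him] at h2
    simp at h2
    exact hs0.ne' h2
  have l1 : (1:ℂ) ∈ Od d := ⟨1, 0, by push_cast; ring⟩
  have l2 : (-1:ℂ) ∈ Od d := ⟨-1, 0, by push_cast; ring⟩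
  have l3 : om d ∈ Od d := ⟨0, 1, by push_cast; ring⟩
  have l4 : -om d ∈ Od d := ⟨0, -1, by push_cast; ring⟩
  have l5 : (1:ℂ) + om d ∈ Od d := ⟨1, 1, by push_cast; ring⟩
  have l6 : -((1:ℂ) + om d) ∈ Od d := ⟨-1, -1, by push_cast; ring⟩
  have c1 := key_ineq hw l1 (by norm_num)
  have c2 := key_ineq hw l2 (by norm_num)
  have c3 := key_ineq hw l3 hom0
  have c4 := key_ineq hw l4 (neg_ne_zero.2 hom0)
  have c5 := key_ineq hw l5 hom1
  have c6 := key_ineq hw l6 (neg_ne_zero.2 hom1)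
  simp only [Complex.one_re, Complex.one_im, Complex.neg_re, Complex.neg_im,
    Complex.add_re, Complex.add_im, hre, him] at c1 c2 c3 c4 c5 c6
  refine ⟨by nlinarith [c1], by nlinarith [c2], by nlinarith [c5], by nlinarith [c4],
    by nlinarith [c3], by nlinarith [c6]⟩

lemma abs_sq_le_rho {d : ℕ} (hd : d = 1 ∨ d = 2 ∨ d = 3 ∨ d = 7 ∨ d = 11)
    {w : ℂ} (hw : w ∈ closure (Kd d)) : w.re^2 + w.im^2 ≤ 8281/10000 := by
  set x := w.re
  set y := w.im
  have hs0 : (0:ℝ) < Real.sqrt d := Real.sqrt_pos.2 (by rcases hd with h|h|h|h|h <;> subst h <;> norm_num)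
  set s := Real.sqrt d with hsdef
  have hs : s^2 = (d:ℝ) := sqrt_sq_eq d
  rcases hd with h|h|h|h|h <;> subst h
  -- d = 1 : om = I
  · have hom : om 1 = Complex.I := by simp [om, Real.sqrt_one]
    have l1 : (1:ℂ) ∈ Od 1 := ⟨1, 0, by push_cast; ring⟩
    have l2 : (-1:ℂ) ∈ Od 1 := ⟨-1, 0, by push_cast; ring⟩
    have l3 : Complex.I ∈ Od 1 := ⟨0, 1, by rw [hom]; push_cast; ring⟩
    have l4 : (-Complex.I) ∈ Od 1 := ⟨0, -1, by rw [hom]; push_cast; ring⟩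
    have c1 := key_ineq hw l1 (by norm_num)
    have c2 := key_ineq hw l2 (by norm_num)
    have c3 := key_ineq hw l3 (by simp [Complex.ext_iff])
    have c4 := key_ineq hw l4 (by simp [Complex.ext_iff])
    simp only [Complex.one_re, Complex.one_im, Complex.neg_re, Complex.neg_im,
      Complex.I_re, Complex.I_im] at c1 c2 c3 c4
    nlinarith [c1, c2, c3, c4]
  -- d = 2 : om = I * √2
  · have hom : om 2 = Complex.I * (s:ℝ) := by simp [om, hsdef]
    have hre : (om 2).re = 0 := by rw [hom]; simp
    have him : (om 2).im = s := by rw [hom]; simp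
    have hom0 : om 2 ≠ 0 := by
      intro hh; rw [Complex.ext_iff] at hh
      exact absurd (him ▸ hh.2) (by simpa using hs0.ne')
    have l1 : (1:ℂ) ∈ Od 2 := ⟨1, 0, by push_cast; ring⟩
    have l2 : (-1:ℂ) ∈ Od 2 := ⟨-1, 0, by push_cast; ring⟩
    have l3 : om 2 ∈ Od 2 := ⟨0, 1, by push_cast; ring⟩
    have l4 : (-om 2) ∈ Od 2 := ⟨0, -1, by push_cast; ring⟩
    have c1 := key_ineq hw l1 (by norm_num)
    have c2 := key_ineq hw l2 (by norm_num)
    have c3 := key_ineq hw l3 hom0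
    have c4 := key_ineq hw l4 (by simpa using hom0)
    simp only [Complex.one_re, Complex.one_im, Complex.neg_re, Complex.neg_im,
      hre, him] at c1 c2 c3 c4
    have p1 : (0:ℝ) ≤ s^2 - 2*(y*s) := by nlinarith [c4]
    have p2 : (0:ℝ) ≤ s^2 + 2*(y*s) := by nlinarith [c3]
    have b1 : (0:ℝ) ≤ 1 - 2*x := by nlinarith [c1]
    have b2 : (0:ℝ) ≤ 1 + 2*x := by nlinarith [c2]
    have hs4 : s^4 = 4 := by rw [show s^4 = (s^2)^2 by ring, hs]; norm_num
    nlinarith [mul_nonneg p1 p2, mul_nonneg b1 b2, hs4]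
  -- d = 3, 7, 11
  all_goals {
    obtain ⟨b1, b2, a1, a2, a3, a4⟩ := odd_facts (by norm_num) hw
    rw [← hsdef] at a1 a2 a3 a4
    rw [hs] at a1 a2 a3 a4
    have hy := congrArg (fun t : ℝ => t * w.im ^ 2) hs
    push_cast at a1 a2 a3 a4 hy
    rcases le_total x 0 with hx | hx
    · nlinarith [mul_nonneg a3 a4, mul_nonneg (neg_nonneg.2 hx) b2, hy]
    · nlinarith [mul_nonneg a1 a2, mul_nonneg hx b1, hy] }



lemma abs_le_rho {d : ℕ} (hd : d = 1 ∨ d = 2 ∨ d = 3 ∨ d = 7 ∨ d = 11)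
    {w : ℂ} (hw : w ∈ closure (Kd d)) : ‖w‖ ≤ 91/100 := by
  have h := abs_sq_le_rho hd hw
  have h2 : (‖w‖)^2 ≤ 8281/10000 := by
    rw [Complex.sq_norm, Complex.normSq_apply]
    nlinarith [h]
  nlinarith [norm_nonneg w, h2]

/-- `B n = |q_n| |x_{n-1}|`. -/
def Bq (g : ℂ → ℂ) (w : ℂ) (n : ℕ) : ℝ :=
  ‖qconv g w n‖ * ‖Xp g w n‖

section main
variable {d : ℕ} (hd : d = 1 ∨ d = 2 ∨ d = 3 ∨ d = 7 ∨ d = 11)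
  {fl : ℂ → ℂ} (hmem : ∀ u : ℂ, fl u ∈ Od d) (hnear : ∀ u : ℂ, u - fl u ∈ closure (Kd d))
  {z : ℂ} (hz : z ∈ Kd d) (hirr : z ∉ Qd d)

include hd hmem in
lemma conv_mem (n : ℕ) : pconv fl z n ∈ Od d ∧ qconv fl z n ∈ Od d ∧
    pprev fl z n ∈ Od d ∧ qprev fl z n ∈ Od d := by
  induction n with
  | zero =>
      refine ⟨?_, ?_, ?_, ?_⟩
      · rw [pconv_zero]; exact Od_zero d
      · rw [qconv_zero]; exact Od_one d
      · rw [pprev_zero]; exact Od_one d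
      · rw [qprev_zero]; exact Od_zero d
  | succ n ih =>
      obtain ⟨h1, h2, h3, h4⟩ := ih
      have ha : aseq fl z (n+1) ∈ Od d := by
        simp only [aseq, Nat.succ_ne_zero, if_false, digit]
        exact hmem _
      exact ⟨by rw [pconv_succ]; exact Od_add (Od_mul hd ha h1) h3,
        by rw [qconv_succ]; exact Od_add (Od_mul hd ha h2) h4,
        by rw [pprev_succ]; exact h1,
        by rw [qprev_succ]; exact h2⟩

include hd hmem hirr in
lemma W_ne_zero : ∀ n : ℕ, W fl z n ≠ 0 := by
  intro n
  induction n using Nat.strong_induction_on with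
  | _ n ih =>
    intro h0
    have hXc : Xc fl z n = 0 := by
      rw [Xc_eq fl z n (fun k hk => ih k hk), h0]
      ring
    have hwr := wronskian fl z n
    rw [hXc, mul_zero, sub_zero] at hwr
    have hq0 : qconv fl z n ≠ 0 := by
      intro hq
      rw [hq, zero_mul] at hwr
      have : ‖(0:ℂ)‖ = ‖(-1:ℂ)^(n+1)‖ := by rw [hwr]
      simp [map_pow] at this
    have hrel : qconv fl z n * z = pconv fl z n := by
      have h := hXc
      simp only [Xc] at h
      exact sub_eq_zero.1 h
    exact hirr (mem_Qd_of_ratio hd (conv_mem hd hmem n).1 (conv_mem hd hmem n).2.1 hq0 hrel)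

include hd hmem hirr hnear hz in
lemma W_mem : ∀ n : ℕ, W fl z n ∈ closure (Kd d) := by
  intro n
  cases n with
  | zero => exact subset_closure hz
  | succ n =>
      rw [W_succ, gauss, if_neg (W_ne_zero hd hmem hirr n)]
      exact hnear _

include hd hmem hirr hnear hz in
lemma absW_le (n : ℕ) : ‖W fl z n‖ ≤ 91/100 :=
  abs_le_rho hd (W_mem hd hmem hnear hz hirr n)

include hd hmem hirr in
lemma absXp_succ (n : ℕ) :
    ‖Xp fl z (n+1)‖ = ‖W fl z n‖ * ‖Xp fl z n‖ := by
  rw [Xp_succ, Xc_eq fl z n (fun k _ => W_ne_zero hd hmem hirr k)]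
  rw [norm_mul, norm_neg]

include hd hmem hirr in
lemma absXp_pos (n : ℕ) : 0 < ‖Xp fl z n‖ := by
  induction n with
  | zero => rw [Xp_zero]; simp
  | succ n ih =>
      rw [absXp_succ hd hmem hirr n]
      exact mul_pos (norm_pos_iff.2 (W_ne_zero hd hmem hirr n)) ih

include hd hmem hirr hnear hz in
lemma absXp_le (n : ℕ) :
    ‖Xp fl z (n+1)‖ ≤ (91/100) * ‖Xp fl z n‖ := by
  rw [absXp_succ hd hmem hirr n]
  have h1 := absW_le hd hmem hnear hz hirr n
  have h2 := (absXp_pos hd hmem hirr n).le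
  exact mul_le_mul_of_nonneg_right h1 h2

include hd hmem hirr hnear hz in
lemma absXp_chain (n m : ℕ) :
    ‖Xp fl z (n+m)‖ ≤ (91/100)^m * ‖Xp fl z n‖ := by
  induction m with
  | zero => simp
  | succ m ih =>
      have h := absXp_le hd hmem hnear hz hirr (n+m)
      calc ‖Xp fl z (n+(m+1))‖ = ‖Xp fl z ((n+m)+1)‖ := by ring_nf
        _ ≤ (91/100) * ‖Xp fl z (n+m)‖ := h
        _ ≤ (91/100) * ((91/100)^m * ‖Xp fl z n‖) := by
            have : (0:ℝ) ≤ 91/100 := by norm_num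
            exact mul_le_mul_of_nonneg_left ih this
        _ = (91/100)^(m+1) * ‖Xp fl z n‖ := by ring

include hd hmem hirr hnear hz in
lemma absXc_succ_le (n : ℕ) :
    ‖qconv fl z n‖ * ‖Xc fl z (n+1)‖ ≤ (8281/10000) * Bq fl z n := by
  have hXc : ‖Xc fl z (n+1)‖
      = ‖W fl z (n+1)‖ * (‖W fl z n‖ * ‖Xp fl z n‖) := by
    rw [← absXp_succ hd hmem hirr n, ← absXp_succ hd hmem hirr (n+1), Xp_succ]
  rw [hXc, Bq]
  have hq := norm_nonneg (qconv fl z n)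
  have hx := (absXp_pos hd hmem hirr n).le
  have h1 := absW_le hd hmem hnear hz hirr n
  have h2 := absW_le hd hmem hnear hz hirr (n+1)
  have hw1 := norm_nonneg (W fl z n)
  have hw2 := norm_nonneg (W fl z (n+1))
  nlinarith [mul_nonneg hq hx, mul_nonneg (mul_nonneg hq hx) hw1]

include hd hmem hirr hnear hz in
lemma Bq_succ_le (n : ℕ) : Bq fl z (n+1) ≤ 1 + (8281/10000) * Bq fl z n := by
  have hwr := wronskian fl z (n+1)
  have heq : qconv fl z (n+1) * Xp fl z (n+1)
      = (-1:ℂ)^(n+2) + qconv fl z n * Xc fl z (n+1) := by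
    rw [← qprev_succ fl z n]
    linear_combination hwr
  have habs : ‖qconv fl z (n+1) * Xp fl z (n+1)‖
      ≤ 1 + ‖qconv fl z n * Xc fl z (n+1)‖ := by
    rw [heq]
    refine le_trans (norm_add_le _ _) ?_
    simp [map_pow]
  rw [norm_mul, norm_mul] at habs
  have h2 := absXc_succ_le hd hmem hnear hz hirr n
  simp only [Bq] at h2 ⊢
  linarith

include hd hmem hirr hnear hz in
lemma Bq_zero : Bq fl z 0 = 1 := by
  simp [Bq, qconv_zero, Xp_zero]

include hd hmem hirr hnear hz in
lemma Bq_le (n : ℕ) : Bq fl z n ≤ 10000/1719 := by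
  induction n with
  | zero => rw [Bq_zero hd hmem hnear hz hirr]; norm_num
  | succ n ih =>
      have h := Bq_succ_le hd hmem hnear hz hirr n
      nlinarith

include hd hmem hirr hnear hz in
lemma good_of_small (n : ℕ) (hB : Bq fl z n ≤ 10000/17472) :
    (101/100) * ‖qconv fl z n‖ ≤ ‖qconv fl z (n+1)‖ := by
  have hwr := wronskian fl z (n+1)
  have heq : qconv fl z (n+1) * Xp fl z (n+1)
      = (-1:ℂ)^(n+2) + qconv fl z n * Xc fl z (n+1) := by
    rw [← qprev_succ fl z n]
    linear_combination hwr
  -- lower bound for |q_{n+1}||x_n|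
  have hlow : 1 - ‖qconv fl z n‖ * ‖Xc fl z (n+1)‖
      ≤ ‖qconv fl z (n+1)‖ * ‖Xp fl z (n+1)‖ := by
    have h1 : ‖(-1:ℂ)^(n+2)‖
        ≤ ‖qconv fl z (n+1) * Xp fl z (n+1)‖
          + ‖qconv fl z n * Xc fl z (n+1)‖ := by
      calc ‖(-1:ℂ)^(n+2)‖
          = ‖(qconv fl z (n+1) * Xp fl z (n+1)) - qconv fl z n * Xc fl z (n+1)‖ := by
            rw [heq]; ring_nf
        _ ≤ _ := norm_sub_le _ _
    rw [norm_mul, norm_mul] at h1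
    simp [map_pow] at h1
    linarith
  have hXcb := absXc_succ_le hd hmem hnear hz hirr n
  -- upper bound for r|q_n||x_n|
  have hup : (101/100) * ‖qconv fl z n‖ * ‖Xp fl z (n+1)‖
      ≤ (9191/10000) * Bq fl z n := by
    rw [absXp_succ hd hmem hirr n]
    have h1 := absW_le hd hmem hnear hz hirr n
    have hq := norm_nonneg (qconv fl z n)
    have hx := (absXp_pos hd hmem hirr n).le
    simp only [Bq]
    nlinarith [mul_nonneg hq hx]
  have hcomb : (101/100) * ‖qconv fl z n‖ * ‖Xp fl z (n+1)‖
      ≤ ‖qconv fl z (n+1)‖ * ‖Xp fl z (n+1)‖ := by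
    have hBq := hB
    nlinarith [hlow, hup, hXcb]
  have hpos : 0 < ‖Xp fl z (n+1)‖ := absXp_pos hd hmem hirr (n+1)
  exact le_of_mul_le_mul_right hcomb hpos

include hd hmem hirr hnear hz in
lemma bad_chain (n : ℕ) : ∀ m : ℕ, 1 ≤ m →
    (∀ i, 1 ≤ i → i ≤ m → ¬ ((101/100) * ‖qconv fl z (n+i-1)‖
        ≤ ‖qconv fl z (n+i)‖)) →
    ‖qconv fl z (n+m)‖ < (101/100)^m * ‖qconv fl z n‖ := by
  intro m
  induction m with
  | zero => intro h; exact absurd h (by omega)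
  | succ m ih =>
      intro _ hbad
      rcases Nat.eq_zero_or_pos m with hm | hm
      · subst hm
        have := hbad 1 le_rfl le_rfl
        push_neg at this
        simpa using this
      · have h1 := ih hm (fun i h1 h2 => hbad i h1 (h2.trans (Nat.le_succ m)))
        have h2 := hbad (m+1) (by omega) le_rfl
        push_neg at h2
        have hee : n + (m+1) - 1 = n + m := by omega
        rw [hee] at h2
        have hq : (0:ℝ) ≤ ‖qconv fl z (n+m)‖ := norm_nonneg _
        calc ‖qconv fl z (n+(m+1))‖
            < (101/100) * ‖qconv fl z (n+m)‖ := h2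
          _ < (101/100) * ((101/100)^m * ‖qconv fl z n‖) := by
              have : (0:ℝ) < 101/100 := by norm_num
              exact (mul_lt_mul_iff_right₀ this).2 h1
          _ = (101/100)^(m+1) * ‖qconv fl z n‖ := by ring

include hd hmem hirr hnear hz in
lemma exists_good (n : ℕ) : ∃ j, n < j ∧ j ≤ n + 29 ∧
    (101/100) * ‖qconv fl z (j-1)‖ ≤ ‖qconv fl z j‖ := by
  by_cases h : ∃ i, 1 ≤ i ∧ i ≤ 28 ∧
      (101/100) * ‖qconv fl z (n+i-1)‖ ≤ ‖qconv fl z (n+i)‖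
  · obtain ⟨i, h1, h2, h3⟩ := h
    exact ⟨n + i, by omega, by omega, h3⟩
  · push_neg at h
    have hbad : ∀ i, 1 ≤ i → i ≤ 28 → ¬ ((101/100) * ‖qconv fl z (n+i-1)‖
        ≤ ‖qconv fl z (n+i)‖) := fun i h1 h2 => not_le.2 (h i h1 h2)
    have hchain := bad_chain hd hmem hnear hz hirr n 28 (by norm_num) hbad
    -- deduce B (n+28) small
    have hXp := absXp_chain hd hmem hnear hz hirr n 28
    have hXpos := absXp_pos hd hmem hirr n
    have hXpos28 := absXp_pos hd hmem hirr (n+28)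
    have hq28 : (0:ℝ) ≤ ‖qconv fl z (n+28)‖ := norm_nonneg _
    have hBn := Bq_le hd hmem hnear hz hirr n
    have hBpos : 0 ≤ Bq fl z n :=
      mul_nonneg (norm_nonneg _) (norm_nonneg _)
    have hsmall : Bq fl z (n+28) ≤ 10000/17472 := by
      have e1 : Bq fl z (n+28) ≤ ‖qconv fl z (n+28)‖ * ((91/100)^28 * ‖Xp fl z n‖) := by
        simp only [Bq]
        exact mul_le_mul_of_nonneg_left hXp hq28
      have e2 : ‖qconv fl z (n+28)‖ * ((91/100)^28 * ‖Xp fl z n‖)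
          ≤ ((101/100)^28 * ‖qconv fl z n‖) * ((91/100)^28 * ‖Xp fl z n‖) := by
        apply mul_le_mul_of_nonneg_right hchain.le
        positivity
      have e3 : ((101/100)^28 * ‖qconv fl z n‖) * ((91/100)^28 * ‖Xp fl z n‖)
          = (9191/10000)^28 * Bq fl z n := by
        simp only [Bq]
        rw [show ((9191:ℝ)/10000) = (101/100)*(91/100) by norm_num, mul_pow]
        ring
      have e4 : (9191/10000 : ℝ)^28 * Bq fl z n ≤ (9191/10000)^28 * (10000/1719) := by
        apply mul_le_mul_of_nonneg_left hBn
        positivity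
      have e5 : (9191/10000 : ℝ)^28 * (10000/1719) ≤ 10000/17472 := by norm_num
      linarith [e1, e2, e3.le, e3.ge, e4, e5]
    have hgood := good_of_small hd hmem hnear hz hirr (n+28) hsmall
    refine ⟨n + 29, by omega, le_rfl, ?_⟩
    have hee : n + 29 - 1 = n + 28 := by omega
    rw [hee]
    have hee2 : n + 29 = (n + 28) + 1 := by omega
    rw [hee2]
    exact hgood

end main
end CF



/-- a subsequence of multiplicative denominator growth with
bounded gaps: there are `r_d > 1` and `M_d ∈ ℕ` such that every irrational
`z ∈ K_d` admits a strictly increasing sequence `(n_k)` of positive integers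
with `n_{k+1} − n_k ≤ M_d` and `|q_{n_k}| ≥ r_d |q_{n_k − 1}|`. -/
theorem subsequence_of_multiplicative_growth
    (d : ℕ) (hd : d = 1 ∨ d = 2 ∨ d = 3 ∨ d = 7 ∨ d = 11)
    (fl : ℂ → ℂ) (hfl_meas : Measurable fl)
    (hfl_mem : ∀ z : ℂ, fl z ∈ Od d)
    (hfl_near : ∀ z : ℂ, z - fl z ∈ closure (Kd d)) :
    ∃ r : ℝ, 1 < r ∧ ∃ M : ℕ,
      ∀ z ∈ Kd d, z ∉ Qd d →
        ∃ nk : ℕ → ℕ, StrictMono nk ∧ (∀ k, 1 ≤ nk k) ∧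
          (∀ k, nk (k + 1) - nk k ≤ M) ∧
          (∀ k, r * ‖qconv fl z (nk k - 1)‖ ≤
            ‖qconv fl z (nk k)‖) := by
  refine ⟨101/100, by norm_num, 29, ?_⟩
  intro z hz hirr
  have eg := CF.exists_good hd hfl_mem hfl_near hz hirr
  choose f h1 h2 h3 using eg
  let nk : ℕ → ℕ := fun k => Nat.rec (f 0) (fun _ prev => f prev) k
  have hnks : ∀ k, nk (k+1) = f (nk k) := fun k => rfl
  have hmono : StrictMono nk := strictMono_nat_of_lt_succ (fun k => by rw [hnks]; exact h1 _)
  refine ⟨nk, hmono, ?_, ?_, ?_⟩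
  · intro k
    induction k with
    | zero => show 1 ≤ f 0; have := h1 0; omega
    | succ k ih => have := h1 (nk k); rw [hnks]; omega
  · intro k
    rw [hnks]
    have := h2 (nk k)
    omega
  · intro k
    cases k with
    | zero => exact h3 0
    | succ k => rw [hnks]; exact h3 (nk k)

end
end
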